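/- Bol's lemma: Let f(t) = (at+b)/(ct+d) with ad − bc = 1 be a Möbius transformation, and set λ(t) = (ct+d)^{-1}, so that f′(t) = λ(t)². Then for every smooth function F and every positive integer m: (d^m/dt^m)[F(f(t))·λ(t)^{1−m}] = F^{(m)}(f(t))·λ(t)^{1+m}, where F^{(m)} denotes the m-th derivative of F. (For m = 1 this is the ordinary chain rule; for m ≥ 2 it holds only for Möbius transformations.) -/

import Mathlib

open Complex Filter Set MeasureTheory

noncomputable section

/-- The Laplacian of a real-valued function on `ℂ` (viewed as `ℝ²`). -/
def lap2 (f : ℂ → ℝ) (z : ℂ) : ℝ :=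
  fderiv ℝ (fun w => fderiv ℝ f w 1) z 1 +
    fderiv ℝ (fun w => fderiv ℝ f w Complex.I) z Complex.I

/-- `f` is harmonic on the set `s`. -/
def HarmOn (f : ℂ → ℝ) (s : Set ℂ) : Prop :=
  ContDiffOn ℝ 2 f s ∧ ∀ z ∈ s, lap2 f z = 0

/-- Wirtinger derivative `∂f/∂z` of a real-valued function. -/
def wdz (f : ℂ → ℝ) (z : ℂ) : ℂ :=
  (((fderiv ℝ f z 1 : ℝ) : ℂ) - Complex.I * ((fderiv ℝ f z Complex.I : ℝ) : ℂ)) / 2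

/-- Wirtinger derivative `∂f/∂z̄` of a real-valued function. -/
def wdzbar (f : ℂ → ℝ) (z : ℂ) : ℂ :=
  (((fderiv ℝ f z 1 : ℝ) : ℂ) + Complex.I * ((fderiv ℝ f z Complex.I : ℝ) : ℂ)) / 2

/-- Wirtinger derivative `∂f/∂z` of a complex-valued function. -/
def wdzC (f : ℂ → ℂ) (z : ℂ) : ℂ :=
  (fderiv ℝ f z 1 - Complex.I * fderiv ℝ f z Complex.I) / 2

/-- Wirtinger derivative `∂f/∂z̄` of a complex-valued function. -/
def wdzbarC (f : ℂ → ℂ) (z : ℂ) : ℂ :=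
  (fderiv ℝ f z 1 + Complex.I * fderiv ℝ f z Complex.I) / 2

/-- The mixed derivative `∂²G/∂z∂ζ` of a two-variable function `G`. -/
def d2G (G : ℂ → ℂ → ℝ) (z ζ : ℂ) : ℂ := wdzC (fun w => wdz (fun x => G x w) z) ζ

/-- The mixed derivative `∂²G/∂z∂ζ̄` of a two-variable function `G`. -/
def d2Gbar (G : ℂ → ℂ → ℝ) (z ζ : ℂ) : ℂ := wdzbarC (fun w => wdz (fun x => G x w) z) ζ

/-- The Bergman kernel `K(z,ζ) = -(2/π)·∂²G/∂z∂ζ̄` of the Green's function `G`. -/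
def KB (G : ℂ → ℂ → ℝ) (z ζ : ℂ) : ℂ := -((2 / Real.pi : ℝ) : ℂ) * d2Gbar G z ζ

/-- The Schiffer kernel `L(z,ζ) = -(2/π)·∂²G/∂z∂ζ` of the Green's function `G`. -/
def LB (G : ℂ → ℂ → ℝ) (z ζ : ℂ) : ℂ := -((2 / Real.pi : ℝ) : ℂ) * d2G G z ζ

/-- `G` is the (Dirichlet) Green's function of the domain `Ω`:
it is symmetric and positive, `G(·,ζ) = -log|z-ζ| + harmonic` in `Ω`,
and `G(·,ζ)` tends to `0` at every boundary point. -/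
structure IsGreenFn (Ω : Set ℂ) (G : ℂ → ℂ → ℝ) : Prop where
  symm : ∀ z ∈ Ω, ∀ ζ ∈ Ω, G z ζ = G ζ z
  pos : ∀ ζ ∈ Ω, ∀ z ∈ Ω, z ≠ ζ → 0 < G z ζ
  harm : ∀ ζ ∈ Ω, ∃ h : ℂ → ℝ, HarmOn h Ω ∧
    ∀ z ∈ Ω, z ≠ ζ → G z ζ = -Real.log ‖z - ζ‖ + h z
  bdry : ∀ ζ ∈ Ω, ∀ w ∈ frontier Ω, Filter.Tendsto (fun z => G z ζ) (nhdsWithin w Ω) (nhds 0)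

/-- The euclidean norm of the gradient of a real-valued function on `ℂ`. -/
def nGrad (f : ℂ → ℝ) (z : ℂ) : ℝ :=
  Real.sqrt ((fderiv ℝ f z 1) ^ 2 + (fderiv ℝ f z Complex.I) ^ 2)

/-- The gradient of a real-valued function on `ℂ`, as a complex number. -/
def gradC (f : ℂ → ℝ) (z : ℂ) : ℂ :=
  ((fderiv ℝ f z 1 : ℝ) : ℂ) + Complex.I * ((fderiv ℝ f z Complex.I : ℝ) : ℂ)

/-- The signed euclidean curvature of a parametrized plane curve. -/
def curvK (γ : ℝ → ℂ) (t : ℝ) : ℝ :=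
  ((starRingEnd ℂ) (deriv γ t) * deriv (deriv γ) t).im / ‖deriv γ t‖ ^ 3

/-- The potential energy `V = -(1/2)|∇u|²`. -/
def potV (u : ℂ → ℝ) (z : ℂ) : ℝ :=
  -(1 / 2) * ((fderiv ℝ u z 1) ^ 2 + (fderiv ℝ u z Complex.I) ^ 2)

/-- The density of the Poincaré metric (of curvature `-4`) obtained by pulling back
`|dζ|/(1-|ζ|²)` under a conformal map `φ` onto the unit disk. -/
def poincareDen (φ : ℂ → ℂ) (z : ℂ) : ℝ := ‖deriv φ z‖ / (1 - ‖φ z‖ ^ 2)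

/-- The period of the differential on the Schottky double represented by the pair
`(f₁, f₂)` along the closed cycle obtained from the path `γ` (run through `Ω`)
together with its mirror path on the back side of the double. -/
def pairPeriod (f₁ f₂ : ℂ → ℂ) (γ : ℝ → ℂ) : ℂ :=
  (∫ t in (0:ℝ)..1, f₁ (γ t) * deriv γ t) -
    (starRingEnd ℂ) (∫ t in (0:ℝ)..1, f₂ (γ t) * deriv γ t)

/-- The annulus `A_{1,R} = {z : 1 < |z| < R}`. -/
def ann (R : ℝ) : Set ℂ := {z : ℂ | 1 < ‖z‖ ∧ ‖z‖ < R}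

/-- The lattice point `2m₁ω₁ + 2m₂ω₂` for the half-periods `ω₁ = log R`, `ω₂ = iπ`. -/
def latC (R : ℝ) (p : ℤ × ℤ) : ℂ :=
  2 * (p.1 : ℂ) * ((Real.log R : ℝ) : ℂ) + 2 * (p.2 : ℂ) * (((Real.pi : ℝ) : ℂ) * Complex.I)

/-- The Weierstrass `℘`-function for the lattice with half-periods `log R` and `iπ`. -/
def weierP (R : ℝ) (z : ℂ) : ℂ :=
  1 / z ^ 2 + ∑' p : {p : ℤ × ℤ // p ≠ 0}, (1 / (z - latC R p.val) ^ 2 - 1 / latC R p.val ^ 2)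

/-- The Weierstrass `ζ`-function for the lattice with half-periods `log R` and `iπ`. -/
def weierZ (R : ℝ) (z : ℂ) : ℂ :=
  1 / z + ∑' p : {p : ℤ × ℤ // p ≠ 0},
    (1 / (z - latC R p.val) + 1 / latC R p.val + z / latC R p.val ^ 2)

/-- The constant `η₁ = ζ(ω₁)` for the half-period `ω₁ = log R`. -/
def eta1 (R : ℝ) : ℂ := weierZ R ((Real.log R : ℝ) : ℂ)

/-- `H` is the analytic completion (in the first variable) of the regular part of the
Green's function `G` of `Ω`, normalized by `Im H(ζ,ζ) = 0`. -/
structure IsACompl (Ω : Set ℂ) (G : ℂ → ℂ → ℝ) (H : ℂ → ℂ → ℂ) : Prop where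
  holo : ∀ ζ ∈ Ω, DifferentiableOn ℂ (fun z => H z ζ) Ω
  re : ∀ ζ ∈ Ω, ∀ z ∈ Ω, z ≠ ζ → (H z ζ).re = G z ζ + Real.log ‖z - ζ‖
  norm : ∀ ζ ∈ Ω, (H ζ ζ).im = 0

end

noncomputable def bolA (m k j : ℕ) : ℂ :=
  (k.choose j : ℂ) * ∏ i ∈ Finset.Ico (j + 1) (k + 1), ((m : ℂ) - i)

lemma bolA_self (m k : ℕ) : bolA m k k = 1 := by
  simp [bolA]

lemma bolA_of_lt (m : ℕ) {k j : ℕ} (h : k < j) : bolA m k j = 0 := by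
  simp [bolA, Nat.choose_eq_zero_of_lt h]

lemma bolA_diag_zero (m : ℕ) {j : ℕ} (h : j < m) : bolA m m j = 0 := by
  rw [bolA, Finset.prod_eq_zero (i := m) (by simp [Nat.succ_le_of_lt h]) (by simp), mul_zero]

lemma bolA_rec0 (m k : ℕ) : bolA m (k + 1) 0 = ((m : ℂ) - 1 - k) * bolA m k 0 := by
  rw [bolA, bolA, Finset.prod_Ico_succ_top (by omega)]
  simp only [Nat.choose_zero_right, Nat.cast_one]
  push_cast
  ring

lemma bolA_rec (m : ℕ) {k j : ℕ} (hj : j ≤ k) :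
    bolA m (k + 1) (j + 1)
      = bolA m k j + ((m : ℂ) - 1 - k - (j + 1)) * bolA m k (j + 1) := by
  rcases eq_or_lt_of_le hj with rfl | hlt
  · rw [bolA_self, bolA_self, bolA_of_lt m (Nat.lt_succ_self _), mul_zero, add_zero]
  · -- j < k, so j+1 ≤ k
    have h1 : j + 1 ≤ k := hlt
    have key : (k.choose (j + 1) : ℂ) * (j + 1) = (k.choose j : ℂ) * ((k : ℂ) - j) := by
      have h2 := Nat.choose_succ_right_eq k j
      have h3 : ((k.choose (j + 1) * (j + 1) : ℕ) : ℂ) = ((k.choose j * (k - j) : ℕ) : ℂ) := by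
        exact congrArg (Nat.cast : ℕ → ℂ) h2
      push_cast [Nat.cast_sub hj] at h3
      exact h3
    have hchoose : ((k + 1).choose (j + 1) : ℂ) = (k.choose j : ℂ) + (k.choose (j + 1) : ℂ) := by
      rw [Nat.choose_succ_succ]; push_cast; ring
    rw [bolA, bolA, bolA, hchoose]
    rw [Finset.prod_Ico_succ_top (by omega : j + 2 ≤ k + 1),
      Finset.prod_eq_prod_Ico_succ_bot (by omega : j + 1 < k + 1)]
    push_cast
    linear_combination (∏ i ∈ Finset.Ico (j + 1 + 1) (k + 1), ((m : ℂ) - i)) * key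

noncomputable def bolU (m k : ℕ) (c w : ℂ) (G : ℕ → ℂ) (j : ℕ) : ℂ :=
  bolA m k j * c ^ (k - j) * G (j + 1) * w ^ ((m : ℤ) - 3 - k - j)

noncomputable def bolV (m k : ℕ) (c w : ℂ) (G : ℕ → ℂ) (i : ℕ) : ℂ :=
  (((m : ℤ) - 1 - k - i : ℤ) : ℂ) * bolA m k i * c ^ (k + 1 - i) * G i *
    w ^ ((m : ℤ) - 2 - k - i)

lemma bol_sum_step (m k : ℕ) (c w : ℂ) (hw : w ≠ 0) (G : ℕ → ℂ) :
    ∑ j ∈ Finset.range (k + 1),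
      (bolA m k j * c ^ (k - j) * G (j + 1) * (w ^ (-2 : ℤ) * w ^ ((m : ℤ) - 1 - k - j))
        + bolA m k j * c ^ (k - j) * G j *
          ((((m : ℤ) - 1 - k - j : ℤ) : ℂ) * w ^ ((m : ℤ) - 1 - k - j - 1) * c))
    = ∑ j ∈ Finset.range (k + 2),
        bolA m (k + 1) j * c ^ (k + 1 - j) * G j * w ^ ((m : ℤ) - 2 - k - j) := by
  have hL : ∀ j ∈ Finset.range (k + 1),
      bolA m k j * c ^ (k - j) * G (j + 1) * (w ^ (-2 : ℤ) * w ^ ((m : ℤ) - 1 - k - j))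
        + bolA m k j * c ^ (k - j) * G j *
          ((((m : ℤ) - 1 - k - j : ℤ) : ℂ) * w ^ ((m : ℤ) - 1 - k - j - 1) * c)
      = bolU m k c w G j + bolV m k c w G j := by
    intro j hj
    have hjk : j ≤ k := Nat.lt_succ_iff.mp (Finset.mem_range.mp hj)
    have e1 : w ^ (-2 : ℤ) * w ^ ((m : ℤ) - 1 - k - j) = w ^ ((m : ℤ) - 3 - k - j) := by
      rw [← zpow_add₀ hw]; congr 1; ring
    have e2 : w ^ ((m : ℤ) - 1 - k - j - 1) = w ^ ((m : ℤ) - 2 - k - j) := by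
      congr 1; ring
    have e3 : c ^ (k + 1 - j) = c ^ (k - j) * c := by
      rw [← pow_succ]; congr 1; omega
    rw [e1, e2, bolU, bolV, e3]; ring
  rw [Finset.sum_congr rfl hL, Finset.sum_range_succ' _ (k + 1)]
  have hR : ∀ j ∈ Finset.range (k + 1),
      bolA m (k + 1) (j + 1) * c ^ (k + 1 - (j + 1)) * G (j + 1) *
          w ^ ((m : ℤ) - 2 - k - (j + 1 : ℕ))
        = bolU m k c w G j + bolV m k c w G (j + 1) := by
    intro j hj
    have hjk : j ≤ k := Nat.lt_succ_iff.mp (Finset.mem_range.mp hj)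
    have e4 : k + 1 - (j + 1) = k - j := by omega
    rw [bolU, bolV, e4, bolA_rec m hjk,
      show w ^ ((m : ℤ) - 3 - k - j) = w ^ ((m : ℤ) - 2 - k - (j + 1 : ℕ)) by
        congr 1; push_cast; ring]
    push_cast
    ring
  rw [Finset.sum_congr rfl hR]
  have h0 : bolA m (k + 1) 0 * c ^ (k + 1 - 0) * G 0 * w ^ ((m : ℤ) - 2 - k - (0 : ℕ))
      = bolV m k c w G 0 := by
    rw [bolV, bolA_rec0]; push_cast; ring
  rw [h0, Finset.sum_add_distrib, Finset.sum_add_distrib, add_assoc]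
  congr 1
  have hz : bolV m k c w G (k + 1) = 0 := by
    rw [bolV, bolA_of_lt m (Nat.lt_succ_self k)]; ring
  rw [← Finset.sum_range_succ' (bolV m k c w G) (k + 1),
    Finset.sum_range_succ (bolV m k c w G) (k + 1), hz, add_zero]

lemma bol_key (a b c d : ℂ) (h : a * d - b * c = 1) (F : ℂ → ℂ) (hF : Differentiable ℂ F)
    (m : ℕ) :
    ∀ k, ∀ t : ℂ, c * t + d ≠ 0 →
      iteratedDeriv k (fun s => F ((a * s + b) / (c * s + d)) * (c * s + d) ^ ((m : ℤ) - 1)) t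
        = ∑ j ∈ Finset.range (k + 1),
            bolA m k j * c ^ (k - j) * iteratedDeriv j F ((a * t + b) / (c * t + d)) *
              (c * t + d) ^ ((m : ℤ) - 1 - k - j) := by
  intro k
  induction k with
  | zero =>
    intro t ht
    simp [bolA, iteratedDeriv_zero]
  | succ k IH =>
    intro t ht
    have hdF : ∀ j : ℕ, Differentiable ℂ (iteratedDeriv j F) := fun j =>
      (hF.contDiff : ContDiff ℂ (j + 1 : ℕ) F).differentiable_iteratedDeriv j
        (by exact_mod_cast Nat.lt_succ_self j)
    have hw2 : HasDerivAt (fun s : ℂ => c * s + d) c t := by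
      simpa using ((hasDerivAt_id t).const_mul c).add_const d
    have hf : HasDerivAt (fun s => (a * s + b) / (c * s + d)) ((c * t + d) ^ (-2 : ℤ)) t := by
      have h1 : HasDerivAt (fun s : ℂ => a * s + b) a t := by
        simpa using ((hasDerivAt_id t).const_mul a).add_const b
      have hdiv := h1.div hw2 ht
      beta_reduce at hdiv
      have key : (a * (c * t + d) - (a * t + b) * c) / (c * t + d) ^ 2
          = (c * t + d) ^ (-2 : ℤ) := by
        rw [show a * (c * t + d) - (a * t + b) * c = 1 by linear_combination h]
        rw [zpow_neg, one_div, show ((2:ℤ)) = ((2:ℕ) : ℤ) by norm_num, zpow_natCast]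
      rwa [key] at hdiv
    have hzpow : ∀ q : ℤ, HasDerivAt (fun s : ℂ => (c * s + d) ^ q)
        ((q : ℂ) * (c * t + d) ^ (q - 1) * c) t := fun q => by
      have := (hasDerivAt_zpow q (c * t + d) (Or.inl ht)).comp t hw2
      simpa [Function.comp_def] using this
    have hG : ∀ j : ℕ, HasDerivAt (fun s : ℂ => iteratedDeriv j F ((a * s + b) / (c * s + d)))
        (iteratedDeriv (j + 1) F ((a * t + b) / (c * t + d)) * (c * t + d) ^ (-2 : ℤ)) t := by
      intro j
      have h1 : HasDerivAt (iteratedDeriv j F)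
          (iteratedDeriv (j + 1) F ((a * t + b) / (c * t + d))) ((a * t + b) / (c * t + d)) := by
        rw [iteratedDeriv_succ]
        exact ((hdF j) _).hasDerivAt
      have := h1.comp t hf
      simpa [Function.comp_def] using this
    have hsum : HasDerivAt (fun s => ∑ j ∈ Finset.range (k + 1),
          bolA m k j * c ^ (k - j) * iteratedDeriv j F ((a * s + b) / (c * s + d)) *
            (c * s + d) ^ ((m : ℤ) - 1 - k - j))
        (∑ j ∈ Finset.range (k + 1),
          (bolA m k j * c ^ (k - j) * iteratedDeriv (j + 1) F ((a * t + b) / (c * t + d)) *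
              ((c * t + d) ^ (-2 : ℤ) * (c * t + d) ^ ((m : ℤ) - 1 - k - j))
            + bolA m k j * c ^ (k - j) * iteratedDeriv j F ((a * t + b) / (c * t + d)) *
              ((((m : ℤ) - 1 - k - j : ℤ) : ℂ) * (c * t + d) ^ ((m : ℤ) - 1 - k - j - 1) * c))) t := by
      apply HasDerivAt.fun_sum
      intro j hj
      have := ((hG j).const_mul (bolA m k j * c ^ (k - j))).fun_mul (hzpow ((m : ℤ) - 1 - k - j))
      exact this.congr_deriv (by ring)
    rw [iteratedDeriv_succ]
    have hcont : Continuous fun s : ℂ => c * s + d := by continuity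
    have hopen : IsOpen ((fun s : ℂ => c * s + d) ⁻¹' {0}ᶜ) :=
      isOpen_compl_singleton.preimage hcont
    have hev : iteratedDeriv k
        (fun s => F ((a * s + b) / (c * s + d)) * (c * s + d) ^ ((m : ℤ) - 1))
        =ᶠ[nhds t] fun s => ∑ j ∈ Finset.range (k + 1),
          bolA m k j * c ^ (k - j) * iteratedDeriv j F ((a * s + b) / (c * s + d)) *
            (c * s + d) ^ ((m : ℤ) - 1 - k - j) := by
      filter_upwards [hopen.mem_nhds (by simpa using ht)] with s hs using IH s hs
    rw [Filter.EventuallyEq.deriv_eq hev, hsum.deriv]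
    rw [bol_sum_step m k c (c * t + d) ht
      (fun j => iteratedDeriv j F ((a * t + b) / (c * t + d)))]
    refine Finset.sum_congr rfl fun j hj => ?_
    congr 2
    push_cast
    ring

/-- **Bol's lemma.** Let `f(t) = (at+b)/(ct+d)` with `ad - bc = 1` and
`λ(t) = (ct+d)⁻¹`, so `f'(t) = λ(t)²`. Then for every holomorphic `F`, every `m ≥ 1`, and
every `t` with `ct + d ≠ 0`,
`(d/dt)^m [F(f(t))·λ(t)^{1-m}] = F⁽ᵐ⁾(f(t))·λ(t)^{1+m}`. -/
theorem bol_lemma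
    (a b c d : ℂ) (h : a * d - b * c = 1)
    (F : ℂ → ℂ) (hF : Differentiable ℂ F)
    (m : ℕ) (hm : 1 ≤ m) (t : ℂ) (ht : c * t + d ≠ 0) :
    iteratedDeriv m
        (fun s => F ((a * s + b) / (c * s + d)) * ((c * s + d)⁻¹) ^ (1 - (m : ℤ))) t
      = iteratedDeriv m F ((a * t + b) / (c * t + d)) * ((c * t + d)⁻¹) ^ (1 + (m : ℤ)) := by
  rw [show (fun s => F ((a * s + b) / (c * s + d)) * ((c * s + d)⁻¹) ^ (1 - (m : ℤ)))
      = fun s => F ((a * s + b) / (c * s + d)) * (c * s + d) ^ ((m : ℤ) - 1) from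
    funext fun s => by rw [inv_zpow', neg_sub]]
  rw [bol_key a b c d h F hF m m t ht, Finset.sum_range_succ]
  rw [Finset.sum_eq_zero fun j hj => by
    rw [bolA_diag_zero m (Finset.mem_range.mp hj)]; ring]
  rw [zero_add, bolA_self, Nat.sub_self, pow_zero, one_mul, one_mul, inv_zpow', neg_add]
  congr 2
  push_cast
  ring
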